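/- Let n ≥ 2, let w ∈ ℝⁿ, let 𝟙 = (1,…,1) ∈ ℝⁿ be the all-ones vector, and assume w and 𝟙 are linearly independent. Let p = w − (⟨w, 𝟙⟩ / ‖𝟙‖²)·𝟙 be the component of w orthogonal to 𝟙 (so p ≠ 0). Then the image of the map t ↦ (w − t·𝟙)/‖w − t·𝟙‖, for t ranging over ℝ, equals the open half of the unit circle {u ∈ span{w, 𝟙} : ‖u‖ = 1 and ⟨u, p⟩ > 0}. -/

import Mathlib

open scoped RealInnerProductSpace

/-- The image of t ↦ (w − t·𝟙)/‖w − t·𝟙‖ is exactly the open half of the unit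
circle of span{w, 𝟙} on the side of p, the component of w orthogonal to 𝟙. -/
theorem ic_unit_normal_range (n : ℕ) (hn : 2 ≤ n)
    (w ones : EuclideanSpace ℝ (Fin n)) (hones : ∀ i, ones i = 1)
    (hind : LinearIndependent ℝ ![w, ones])
    (p : EuclideanSpace ℝ (Fin n))
    (hp : p = w - ((⟪w, ones⟫ / ‖ones‖ ^ 2) • ones)) :
    p ≠ 0 ∧
    (Set.range fun t : ℝ => ‖w - t • ones‖⁻¹ • (w - t • ones)) =
      {u : EuclideanSpace ℝ (Fin n) |
        u ∈ Submodule.span ℝ ({w, ones} : Set (EuclideanSpace ℝ (Fin n))) ∧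
        ‖u‖ = 1 ∧ ⟪u, p⟫ > 0} := by
  have hones0 : ones ≠ 0 := by
    intro h
    have h0 : ones ⟨0, by omega⟩ = 0 := by rw [h]; rfl
    rw [hones] at h0
    norm_num at h0
  have hno : ‖ones‖ ≠ 0 := norm_ne_zero_iff.mpr hones0
  have hnd : ∀ a b : ℝ, a • w + b • ones = 0 → a = 0 ∧ b = 0 :=
    LinearIndependent.pair_iff.mp hind
  have hpo : ⟪p, ones⟫ = 0 := by
    rw [hp, inner_sub_left, real_inner_smul_left, real_inner_self_eq_norm_sq]
    field_simp
    ring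
  have hop' : ⟪ones, p⟫ = 0 := by rw [real_inner_comm]; exact hpo
  have hw' : w = p + (⟪w, ones⟫ / ‖ones‖ ^ 2) • ones := by rw [hp]; abel
  have hwp : ⟪w, p⟫ = ‖p‖ ^ 2 := by
    nth_rewrite 1 [hw']
    rw [inner_add_left, real_inner_smul_left, hop', real_inner_self_eq_norm_sq]
    ring
  have hpne : p ≠ 0 := by
    intro h0
    have : (1 : ℝ) • w + (-(⟪w, ones⟫ / ‖ones‖ ^ 2)) • ones = 0 := by
      rw [one_smul, neg_smul, ← sub_eq_add_neg, ← hp, h0]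
    exact one_ne_zero (hnd _ _ this).1
  have hvne : ∀ t : ℝ, w - t • ones ≠ 0 := by
    intro t h0
    have : (1 : ℝ) • w + (-t) • ones = 0 := by
      rw [one_smul, neg_smul, ← sub_eq_add_neg, h0]
    exact one_ne_zero (hnd _ _ this).1
  have hpnorm : (0:ℝ) < ‖p‖ ^ 2 := pow_pos (norm_pos_iff.mpr hpne) 2
  refine ⟨hpne, ?_⟩
  ext u
  constructor
  · rintro ⟨t, rfl⟩
    have hwmem : w ∈ Submodule.span ℝ ({w, ones} : Set (EuclideanSpace ℝ (Fin n))) :=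
      Submodule.subset_span (Set.mem_insert _ _)
    have honesmem : ones ∈ Submodule.span ℝ ({w, ones} : Set (EuclideanSpace ℝ (Fin n))) :=
      Submodule.subset_span (Set.mem_insert_of_mem _ rfl)
    refine ⟨Submodule.smul_mem _ _ (Submodule.sub_mem _ hwmem (Submodule.smul_mem _ _ honesmem)),
      norm_smul_inv_norm (hvne t), ?_⟩
    rw [real_inner_smul_left, inner_sub_left, real_inner_smul_left, hop', hwp]
    have : (0:ℝ) < ‖w - t • ones‖⁻¹ := by
      rw [inv_pos]; exact norm_pos_iff.mpr (hvne t)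
    nlinarith
  · rintro ⟨hu_span, hu_norm, hu_inner⟩
    obtain ⟨a, b, hab⟩ := Submodule.mem_span_pair.mp hu_span
    have hup : ⟪u, p⟫ = a * ‖p‖ ^ 2 := by
      rw [← hab, inner_add_left, real_inner_smul_left, real_inner_smul_left, hwp, hop']
      ring
    have hapos : 0 < a := by
      rw [hup] at hu_inner
      rcases mul_pos_iff.mp hu_inner with ⟨h1, _⟩ | ⟨_, h2⟩
      · exact h1
      · linarith
    have ha0 : a ≠ 0 := ne_of_gt hapos
    refine ⟨-(b / a), ?_⟩
    have key : w - (-(b / a)) • ones = a⁻¹ • u := by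
      rw [← hab, smul_add, smul_smul, smul_smul, inv_mul_cancel₀ ha0, one_smul,
        neg_smul, sub_neg_eq_add, div_eq_inv_mul]
    simp only [key, norm_smul, hu_norm, mul_one, Real.norm_eq_abs, abs_inv,
      abs_of_pos hapos, inv_inv, smul_smul, mul_inv_cancel₀ ha0, one_smul]
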